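/- Let G be a threshold graph on a finite vertex set, and let λ be an eigenvalue of the adjacency matrix of G satisfying (−1−√2)/2 ≤ λ ≤ (−1+√2)/2. Then λ = −1 or λ = 0. In other words, other than the trivial eigenvalues −1 and 0, the interval [(−1−√2)/2, (−1+√2)/2] contains no eigenvalue of any threshold graph. -/

import Mathlib

/-- A graph is a threshold graph if adjacency is determined by vertex weights
exceeding a threshold. -/
def SimpleGraph.IsThreshold {V : Type*} (G : SimpleGraph V) : Prop :=
  ∃ (S : ℝ) (w : V → ℝ), ∀ u v : V, u ≠ v → (G.Adj u v ↔ S < w u + w v)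

/-- `μ` is an eigenvalue of the adjacency matrix of `G`. -/
def SimpleGraph.HasAdjEigenvalue {V : Type*} [Fintype V] (G : SimpleGraph V) (μ : ℝ) : Prop :=
  letI := Classical.decEq V
  letI : DecidableRel G.Adj := Classical.decRel _
  ∃ x : V → ℝ, x ≠ 0 ∧ (G.adjMatrix ℝ).mulVec x = μ • x

namespace ThresholdAux

open Finset

attribute [local instance] Classical.propDecidable

/-- Sum of `x` over the neighbours of `u`. -/
noncomputable def sumNbr {V : Type*} [Fintype V] (G : SimpleGraph V) (x : V → ℝ) (u : V) : ℝ :=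
  ∑ w : V, if G.Adj u w then x w else 0

/-- The linear system `(A - l I) x = -c 𝟙`. -/
def Sys {V : Type*} [Fintype V] (G : SimpleGraph V) (l : ℝ) (x : V → ℝ) (c : ℝ) : Prop :=
  ∀ u : V, sumNbr G x u = l * x u - c

lemma sum_split {V : Type*} [Fintype V] [DecidableEq V] (v : V) (F : V → ℝ) :
    ∑ u, F u = F v + ∑ u : {w : V // w ≠ v}, F ↑u := by
  rw [← Finset.sum_subtype (Finset.univ.erase v) (fun x => by simp [Finset.mem_erase]) F]
  exact (Finset.add_sum_erase _ F (Finset.mem_univ v)).symm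

/-- In a nonempty threshold graph there is a vertex that is isolated or dominating. -/
lemma exists_pivot {V : Type*} [Fintype V] [Nonempty V] {G : SimpleGraph V}
    (hG : G.IsThreshold) :
    ∃ v : V, (∀ u, u ≠ v → ¬ G.Adj u v) ∨ (∀ u, u ≠ v → G.Adj u v) := by
  obtain ⟨S, w, hw⟩ := hG
  obtain ⟨vmin, -, hmin⟩ := Finset.exists_min_image Finset.univ w Finset.univ_nonempty
  by_cases h : ∀ u, u ≠ vmin → ¬ G.Adj u vmin
  · exact ⟨vmin, Or.inl h⟩
  · push_neg at h
    obtain ⟨z, hz, hadj⟩ := h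
    obtain ⟨vmax, -, hmax⟩ := Finset.exists_max_image Finset.univ w Finset.univ_nonempty
    refine ⟨vmax, Or.inr fun u hu => ?_⟩
    have h1 : S < w z + w vmin := (hw z vmin hz).mp hadj
    have h2 : w vmin ≤ w u := hmin u (Finset.mem_univ u)
    have h3 : w z ≤ w vmax := hmax z (Finset.mem_univ z)
    exact (hw u vmax hu).mpr (by linarith)

/-- The key induction: peeling isolated / dominating vertices. -/
lemma key (l : ℝ) (Reg : ℝ → Prop) (hl0 : l ≠ 0) (h0 : Reg 0)
    (hiso : ∀ ρ, Reg ρ → Reg (ρ + 1 / l))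
    (hdom : ∀ ρ, Reg ρ → l - ρ ≠ 0 ∧ Reg (ρ + (1 + ρ) ^ 2 / (l - ρ))) :
    ∀ (n : ℕ) (V : Type u) (_ : Fintype V) (G : SimpleGraph V),
      Fintype.card V = n → G.IsThreshold →
      ∃ ρ, Reg ρ ∧ ∀ (x : V → ℝ) (c : ℝ), Sys G l x c →
        (∑ u, x u) = ρ * c ∧ (c = 0 → x = 0) := by
  intro n
  induction n using Nat.strong_induction_on with
  | _ n IH =>
    intro V instV G hcard hG
    match n, hcard with
    | 0, hcard =>
      haveI : IsEmpty V := Fintype.card_eq_zero_iff.mp hcard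
      refine ⟨0, h0, fun x c _ => ⟨by simp, fun _ => funext fun u => (IsEmpty.false u).elim⟩⟩
    | (n+1), hcard =>
      haveI : Nonempty V := Fintype.card_pos_iff.mp (by omega)
      letI : DecidableEq V := Classical.decEq V
      obtain ⟨v, hv⟩ := exists_pivot hG
      obtain ⟨S, w, hw⟩ := hG
      set V' := {u : V // u ≠ v}
      have hcard' : Fintype.card V' = n := by
        have : Fintype.card V' = Fintype.card V - 1 := by
          simp [V', Fintype.card_subtype_compl]
        omega
      set G' : SimpleGraph V' := SimpleGraph.comap (Subtype.val) G with hG'def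
      have hG' : G'.IsThreshold := by
        refine ⟨S, fun u => w u.val, fun a b hab => ?_⟩
        simpa [hG'def] using hw a.val b.val (Subtype.coe_injective.ne hab)
      obtain ⟨ρ, hρ, hIH⟩ := IH n (by omega) V' _ G' hcard' hG'
      -- a helper to convert rows
      have hrow : ∀ (x : V → ℝ) (u : V'),
          sumNbr G' (fun t : V' => x ↑t) u
            = sumNbr G x ↑u - (if G.Adj ↑u v then x v else 0) := by
        intro x u
        classical
        have := sum_split (v := v) (F := fun t => if G.Adj ↑u t then x t else 0)
        unfold sumNbr
        rw [show (∑ t : V, if G.Adj (↑u) t then x t else 0)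
            = (if G.Adj ↑u v then x v else 0)
              + ∑ t : V', (if G.Adj ↑u ↑t then x ↑t else 0) from this]
        have : ∀ t : V', (if G'.Adj u t then x ↑t else 0) = (if G.Adj ↑u ↑t then x ↑t else 0) := by
          intro t; simp [hG'def]
        beta_reduce
        rw [add_sub_cancel_left]
        exact Finset.sum_congr rfl (fun t _ => by convert this t)
      rcases hv with hv | hv
      · -- isolated vertex
        refine ⟨ρ + 1 / l, hiso ρ hρ, fun x c hsys => ?_⟩
        have hrowv : sumNbr G x v = 0 := by
          apply Finset.sum_eq_zero
          intro t _
          rcases eq_or_ne t v with rfl | ht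
          · simp
          · have : ¬ G.Adj v t := fun hadj => hv t ht hadj.symm
            simp [this]
        have hxv : x v = c / l := by
          have := hsys v
          rw [hrowv] at this
          field_simp
          linarith
        have hsys' : Sys G' l (fun t : V' => x ↑t) c := by
          intro u
          have h1 := hrow x u
          have h2 : ¬ G.Adj ↑u v := hv ↑u u.2
          rw [hsys ↑u] at h1
          simpa [h2] using h1
        obtain ⟨hsum', hz'⟩ := hIH (fun t : V' => x ↑t) c hsys'
        constructor
        · rw [sum_split v x, hsum', hxv]
          field_simp
          ring
        · intro hc
          subst hc
          have hx0 : x v = 0 := by rw [hxv]; simp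
          have := hz' rfl
          funext u
          rcases eq_or_ne u v with rfl | hu
          · exact hx0
          · exact congrFun this ⟨u, hu⟩
      · -- dominating vertex
        obtain ⟨hlρ, hReg'⟩ := hdom ρ hρ
        refine ⟨ρ + (1 + ρ) ^ 2 / (l - ρ), hReg', fun x c hsys => ?_⟩
        have hrowv : sumNbr G x v = ∑ u : V', x ↑u := by
          unfold sumNbr
          rw [sum_split (v := v) (F := fun t => if G.Adj v t then x t else 0)]
          have h1 : (if G.Adj v v then x v else 0) = 0 := by simp
          have h2 : ∀ t : V', (if G.Adj v ↑t then x ↑t else 0) = x ↑t := by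
            intro t; rw [if_pos ((hv ↑t t.2).symm)]
          rw [h1, Finset.sum_congr rfl (fun t _ => h2 t), zero_add]
        have hsys' : Sys G' l (fun t : V' => x ↑t) (c + x v) := by
          intro u
          have h1 := hrow x u
          have h2 : G.Adj ↑u v := hv ↑u u.2
          rw [hsys ↑u] at h1
          rw [h1, if_pos h2]
          ring
        obtain ⟨hsum', hz'⟩ := hIH (fun t : V' => x ↑t) (c + x v) hsys'
        have hveq : (l - ρ) * x v = (1 + ρ) * c := by
          have h3 := hsys v
          rw [hrowv, hsum'] at h3
          linarith [h3]
        constructor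
        · rw [sum_split v x, hsum']
          have hne : l - ρ ≠ 0 := hlρ
          field_simp
          linear_combination (1 + ρ) * hveq
        · intro hc
          subst hc
          have hx0 : x v = 0 := by
            have : (l - ρ) * x v = 0 := by rw [hveq]; ring
            exact (mul_eq_zero.mp this).resolve_left hlρ
          have := hz' (by rw [hx0]; ring)
          funext u
          rcases eq_or_ne u v with rfl | hu
          · exact hx0
          · exact congrFun this ⟨u, hu⟩

/-!  The invariant regions. -/

set_option maxHeartbeats 1000000 in
lemma region (l : ℝ) (hl0 : l ≠ 0) (hl1 : l ≠ -1) (h2 : (1 + 2*l)^2 ≤ 2) :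
    ∃ Reg : ℝ → Prop, Reg 0 ∧ (∀ ρ, Reg ρ → Reg (ρ + 1 / l)) ∧
      (∀ ρ, Reg ρ → l - ρ ≠ 0 ∧ Reg (ρ + (1 + ρ) ^ 2 / (l - ρ))) := by
  have hA : 4*l^2 + 4*l ≤ 1 := by nlinarith [h2]
  have hinv : l * (1/l) = 1 := mul_one_div_cancel hl0
  rcases lt_trichotomy l 0 with hl | hl | hl
  · rcases lt_trichotomy l (-1) with hll | hll | hll
    · -- Case M : l < -1
      set q := Real.sqrt (2 - (1 + 2*l)^2) with hqdef
      have hq0 : 0 ≤ q := Real.sqrt_nonneg _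
      have hq2 : q^2 = 2 - (1 + 2*l)^2 := Real.sq_sqrt (by linarith)
      set m := (q - 1 - 2*l) / (2*l) with hmdef
      have h2l : (2*l) ≠ 0 := mul_ne_zero two_ne_zero hl0
      have e1 : 2*l*m = q - 1 - 2*l := by
        rw [hmdef]; field_simp
      have hm : l*m^2 + (1+2*l)*m + 2 + 2*l = 0 := by
        have key : (2*l*m)^2 + 2*(1+2*l)*(2*l*m) + 8*l + 8*l^2 = 0 := by
          rw [e1]; linear_combination hq2
        have h4 : 4*l*(l*m^2 + (1+2*l)*m + 2 + 2*l) = 0 := by linear_combination key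
        have h4l : (4:ℝ)*l ≠ 0 := mul_ne_zero (by norm_num) hl0
        exact (mul_eq_zero.mp h4).resolve_left h4l
      have hb2 : (m*l - 1)*l = (m*l + 1)*(m + l + 2) := by linear_combination -hm
      set b := m + 1/l with hbdef
      have hbl : b*l = m*l + 1 := by rw [hbdef]; field_simp
      have e2 : 2*l*b = q + 1 - 2*l := by linear_combination 2*hbl + e1
      have hEq : m*l - 1 = b*(m + l + 2) := by
        have h9 : l*((m*l - 1) - b*(m + l + 2)) = 0 := by
          linear_combination hb2 - (m + l + 2)*hbl
        have := (mul_eq_zero.mp h9).resolve_left hl0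
        linarith [this]
      -- basic facts
      have h32 : 0 < 3 + 2*l := by nlinarith [h2]
      have m1 : -1 < 1/l := by rw [lt_div_iff_of_neg hl]; linarith
      have hq3 : q ≤ 3 + 2*l := by nlinarith [hq0, hq2, h32, sq_nonneg (1+l)]
      have m2 : 1/l ≤ m := by
        have h7 : (m - 1/l) * (2*l) = q - 3 - 2*l := by linear_combination e1 - 2*hinv
        nlinarith [h7, hq3, hl]
      have m4 : b ≤ -1 := by nlinarith [e2, hq0, hl]
      have m3 : b < l := by nlinarith [e2, hq0, hA, hl]
      have m6 : 0 ≤ m + l + 2 := by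
        have h5 : 2*l*(m + l + 2) = q - (1 - 2*l - 2*l^2) := by rw [mul_add, mul_add, e1]; ring
        have hR : (0:ℝ) < 1 - 2*l - 2*l^2 := by nlinarith [hA]
        have h6 : q ≤ 1 - 2*l - 2*l^2 := by
          have hsum : 0 < q + (1 - 2*l - 2*l^2) := by linarith
          nlinarith [hq2, hsum, sq_nonneg (l*(1+l))]
        nlinarith [h5, h6, hl]
      have m7 : -1 ≤ m := le_trans m1.le m2
      -- region
      refine ⟨fun ρ => ρ = 0 ∨ ρ ≤ b ∨ (-1 ≤ ρ ∧ ρ ≤ m), Or.inl rfl, ?_, ?_⟩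
      · have hil : 1/l < 0 := one_div_neg.mpr hl
        rintro ρ (rfl | hρ | ⟨hρ1, hρ2⟩)
        · exact Or.inr (Or.inr ⟨by linarith, by linarith⟩)
        · exact Or.inr (Or.inl (by rw [hbdef]; linarith))
        · exact Or.inr (Or.inl (by rw [hbdef]; linarith))
      · rintro ρ (rfl | hρ | ⟨hρ1, hρ2⟩)
        · refine ⟨by simpa using hl0, Or.inr (Or.inr ⟨?_, ?_⟩)⟩
          · have : 0 + (1+0)^2/(l-0) = 1/l := by norm_num
            rw [this]; linarith
          · have : 0 + (1+0)^2/(l-0) = 1/l := by norm_num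
            rw [this]; linarith
        · -- piece B
          have hd : 0 < l - ρ := by linarith
          refine ⟨ne_of_gt hd, Or.inr (Or.inr ⟨?_, ?_⟩)⟩
          · have h5 : (-1 - ρ) * (l - ρ) ≤ (1+ρ)^2 := by nlinarith [m4, hρ, hll]
            have := (le_div_iff₀ hd).mpr h5
            linarith
          · have h5 : (1+ρ)^2 ≤ (m - ρ) * (l - ρ) := by
              nlinarith [hEq, mul_nonneg (sub_nonneg.mpr hρ) m6]
            have := (div_le_iff₀ hd).mpr h5
            linarith
        · -- piece C
          have hd : l - ρ < 0 := by linarith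
          refine ⟨ne_of_lt hd, Or.inr (Or.inr ⟨?_, ?_⟩)⟩
          · have h5 : (1+ρ)^2 ≤ (-1 - ρ) * (l - ρ) := by nlinarith [hρ1, hll]
            have := (le_div_iff_of_neg hd).mpr h5
            linarith
          · have h5 : (1+ρ)^2/(l-ρ) ≤ 0 :=
              div_nonpos_of_nonneg_of_nonpos (sq_nonneg _) hd.le
            linarith
    · exact absurd hll hl1
    · -- Case N : -1 < l < 0
      have hil : 1/l ≤ -1 := by rw [div_le_iff_of_neg hl]; linarith
      have hil0 : 1/l < 0 := one_div_neg.mpr hl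
      refine ⟨fun ρ => ρ = 0 ∨ ρ ≤ -1, Or.inl rfl, ?_, ?_⟩
      · rintro ρ (rfl | hρ)
        · exact Or.inr (by linarith)
        · exact Or.inr (by linarith)
      · rintro ρ (rfl | hρ)
        · refine ⟨by simpa using hl0, Or.inr ?_⟩
          have : 0 + (1+0)^2/(l-0) = 1/l := by norm_num
          rw [this]; linarith
        · have hd : 0 < l - ρ := by linarith
          refine ⟨ne_of_gt hd, Or.inr ?_⟩
          have h5 : (1 + ρ)^2 ≤ (-1 - ρ) * (l - ρ) := by nlinarith [hρ, hll]
          have := (div_le_iff₀ hd).mpr h5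
          linarith
  · exact absurd hl hl0
  · -- Case P : 0 < l
    set q := Real.sqrt (2 - (1 + 2*l)^2) with hqdef
    have hq0 : 0 ≤ q := Real.sqrt_nonneg _
    have hq2 : q^2 = 2 - (1 + 2*l)^2 := Real.sq_sqrt (by linarith)
    set m := (q - 1 - 2*l) / (2*l) with hmdef
    have h2l : (2*l) ≠ 0 := mul_ne_zero two_ne_zero hl0
    have e1 : 2*l*m = q - 1 - 2*l := by rw [hmdef]; field_simp
    have hm : l*m^2 + (1+2*l)*m + 2 + 2*l = 0 := by
      have key : (2*l*m)^2 + 2*(1+2*l)*(2*l*m) + 8*l + 8*l^2 = 0 := by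
        rw [e1]; linear_combination hq2
      have h4 : 4*l*(l*m^2 + (1+2*l)*m + 2 + 2*l) = 0 := by linear_combination key
      have h4l : (4:ℝ)*l ≠ 0 := mul_ne_zero (by norm_num) hl0
      exact (mul_eq_zero.mp h4).resolve_left h4l
    have hb2 : (m*l - 1)*l = (m*l + 1)*(m + l + 2) := by linear_combination -hm
    set b := m + 1/l with hbdef
    have hbl : b*l = m*l + 1 := by rw [hbdef]; field_simp
    have e2 : 2*l*b = q + 1 - 2*l := by linear_combination 2*hbl + e1
    have hEq : m*l - 1 = b*(m + l + 2) := by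
      have h9 : l*((m*l - 1) - b*(m + l + 2)) = 0 := by
        linear_combination hb2 - (m + l + 2)*hbl
      have := (mul_eq_zero.mp h9).resolve_left hl0
      linarith [this]
    have hil : 0 < 1/l := one_div_pos.mpr hl
    have hq1 : q ≤ 1 := by nlinarith [hq0, hq2, hl]
    have p1 : m ≤ -1 := by nlinarith [e1, hq1, hl]
    have p2 : l < b := by nlinarith [e2, hq0, hA, hl]
    have p3 : m + l + 2 ≤ 0 := by
      have h5 : 2*l*(m + l + 2) = q - (1 - 2*l - 2*l^2) := by rw [mul_add, mul_add, e1]; ring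
      have hR : (0:ℝ) < 1 - 2*l - 2*l^2 := by nlinarith [hA]
      have h6 : q ≤ 1 - 2*l - 2*l^2 := by
        have hsum : 0 < q + (1 - 2*l - 2*l^2) := by linarith
        nlinarith [hq2, hsum, sq_nonneg (l*(1+l))]
      nlinarith [h5, h6, hl]
    refine ⟨fun ρ => ρ = 0 ∨ (m ≤ ρ ∧ ρ ≤ -1) ∨ b ≤ ρ, Or.inl rfl, ?_, ?_⟩
    · rintro ρ (rfl | ⟨hρ1, hρ2⟩ | hρ)
      · exact Or.inr (Or.inr (by rw [hbdef]; linarith))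
      · exact Or.inr (Or.inr (by rw [hbdef]; linarith))
      · exact Or.inr (Or.inr (by linarith))
    · rintro ρ (rfl | ⟨hρ1, hρ2⟩ | hρ)
      · refine ⟨by simpa using hl0, Or.inr (Or.inr ?_)⟩
        have : 0 + (1+0)^2/(l-0) = 1/l := by norm_num
        rw [this, hbdef]; linarith
      · -- piece B
        have hd : 0 < l - ρ := by linarith
        refine ⟨ne_of_gt hd, Or.inr (Or.inl ⟨?_, ?_⟩)⟩
        · have h5 : 0 ≤ (1+ρ)^2/(l-ρ) := div_nonneg (sq_nonneg _) hd.le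
          linarith
        · have h5 : (1+ρ)^2 ≤ (-1 - ρ) * (l - ρ) := by nlinarith [hρ2, hl]
          have := (div_le_iff₀ hd).mpr h5
          linarith
      · -- piece C
        have hρl : l < ρ := lt_of_lt_of_le p2 hρ
        have hd : l - ρ < 0 := by linarith
        refine ⟨ne_of_lt hd, Or.inr (Or.inl ⟨?_, ?_⟩)⟩
        · have h5 : (1+ρ)^2 ≤ (m - ρ) * (l - ρ) := by
            nlinarith [hEq, mul_nonneg (sub_nonneg.mpr hρ) (neg_nonneg.mpr p3)]
          have := (le_div_iff_of_neg hd).mpr h5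
          linarith
        · have h1ρ : 0 < 1 + ρ := by linarith
          have h5 : (-1 - ρ) * (l - ρ) ≤ (1+ρ)^2 := by nlinarith [h1ρ, hl, hd]
          have := (div_le_iff_of_neg hd).mpr h5
          linarith

end ThresholdAux

theorem threshold_eigenvalue_interval_trivial {V : Type*} [Fintype V] (G : SimpleGraph V)
    (hG : G.IsThreshold) (μ : ℝ) (hμ : G.HasAdjEigenvalue μ)
    (h₁ : (-1 - Real.sqrt 2) / 2 ≤ μ) (h₂ : μ ≤ (-1 + Real.sqrt 2) / 2) :
    μ = -1 ∨ μ = 0 := by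
  classical
  by_contra hcon
  push_neg at hcon
  obtain ⟨hne1, hne0⟩ := hcon
  have hs2 : Real.sqrt 2 ^ 2 = 2 := Real.sq_sqrt (by norm_num)
  have h2 : (1 + 2*μ)^2 ≤ 2 := by nlinarith [Real.sqrt_nonneg 2]
  obtain ⟨Reg, h0, hiso, hdom⟩ := ThresholdAux.region μ hne0 hne1 h2
  obtain ⟨ρ, -, hkey⟩ := ThresholdAux.key μ Reg hne0 h0 hiso hdom
    (Fintype.card V) V ‹_› G rfl hG
  obtain ⟨x, hx0, hx⟩ := hμ
  have hsys : ThresholdAux.Sys G μ x 0 := by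
    intro u
    have h1 : (G.adjMatrix ℝ).mulVec x u = μ * x u := by rw [hx]; simp
    rw [SimpleGraph.adjMatrix_mulVec_apply] at h1
    have h3 : ∑ w ∈ G.neighborFinset u, x w = ThresholdAux.sumNbr G x u := by
      classical
      rw [SimpleGraph.neighborFinset_eq_filter, Finset.sum_filter]
      unfold ThresholdAux.sumNbr
      congr 1
    rw [h3] at h1
    rw [h1]; ring
  exact hx0 ((hkey x 0 hsys).2 rfl)
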